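/- Let c be a real number and let a : ℕ → ℝ satisfy a(0) = 0, a(1) = 9c, a(2) = 9c² + 9c, and the recurrence a(i) = a(i−1) + 6·a(i−2) + 3·6^{i−2}·c² for all i ≥ 3. Then for every real x, the series ∑_{n≥0} a(n)·x^n/n! converges with sum c²·( (1/8)·e^{6x} + (27/40)·e^{−2x} + (1/5)·e^{3x} ) + (9c/5)·( e^{3x} − e^{−2x} ) − c². -/

import Mathlib

theorem sl3_weight_system_ladder_egf
    (c : ℝ) (a : ℕ → ℝ) (h0 : a 0 = 0) (h1 : a 1 = 9 * c)
    (h2 : a 2 = 9 * c ^ 2 + 9 * c)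
    (hrec : ∀ i, 3 ≤ i → a i = a (i - 1) + 6 * a (i - 2) + 3 * 6 ^ (i - 2) * c ^ 2)
    (x : ℝ) :
    HasSum (fun n => a n * x ^ n / n.factorial)
      (c ^ 2 * ((1 / 8) * Real.exp (6 * x) + (27 / 40) * Real.exp (-2 * x)
          + (1 / 5) * Real.exp (3 * x))
        + (9 * c / 5) * (Real.exp (3 * x) - Real.exp (-2 * x)) - c ^ 2) := by
  have key : ∀ n, a n + (if n = 0 then c ^ 2 else 0)
      = c ^ 2 * ((1/8) * 6 ^ n + (27/40) * (-2 : ℝ) ^ n + (1/5) * 3 ^ n)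
        + (9 * c / 5) * ((3:ℝ) ^ n - (-2 : ℝ) ^ n) := by
    intro n
    induction n using Nat.strong_induction_on with
    | _ n ih =>
      match n with
      | 0 => simp [h0]; ring
      | 1 => simp [h1]; ring
      | 2 => simp [h2]; ring
      | (m+3) =>
        have hr := hrec (m+3) (by omega)
        have e1 : m + 3 - 1 = m + 2 := rfl
        have e2 : m + 3 - 2 = m + 1 := rfl
        rw [e1, e2] at hr
        have ih1 := ih (m+2) (by omega)
        have ih2 := ih (m+1) (by omega)
        rw [if_neg (by omega : ¬ m + 2 = 0)] at ih1
        rw [if_neg (by omega : ¬ m + 1 = 0)] at ih2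
        rw [if_neg (by omega : ¬ m + 3 = 0), add_zero] at *
        rw [hr, ih1, ih2]
        simp only [pow_succ]
        ring
  have hexp : ∀ r : ℝ, HasSum (fun n : ℕ => r ^ n / n.factorial) (Real.exp r) := by
    intro r
    rw [Real.exp_eq_exp_ℝ]
    exact NormedSpace.expSeries_div_hasSum_exp r
  have h6 := (hexp (6 * x)).mul_left (c ^ 2 / 8)
  have hm2 := (hexp (-2 * x)).mul_left (27 * c ^ 2 / 40 - 9 * c / 5)
  have h3 := (hexp (3 * x)).mul_left (c ^ 2 / 5 + 9 * c / 5)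
  have hind : HasSum (fun n : ℕ => if n = 0 then (c ^ 2 : ℝ) else 0) (c ^ 2) := by
    exact hasSum_ite_eq (0 : ℕ) (c ^ 2)
  have htot := ((h6.add hm2).add h3).sub hind
  have hfun : (fun n : ℕ => a n * x ^ n / n.factorial)
      = fun n : ℕ => (c ^ 2 / 8 * ((6 * x) ^ n / n.factorial)
          + (27 * c ^ 2 / 40 - 9 * c / 5) * ((-2 * x) ^ n / n.factorial))
          + (c ^ 2 / 5 + 9 * c / 5) * ((3 * x) ^ n / n.factorial)
          - (if n = 0 then c ^ 2 else 0) := by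
    funext n
    have hk := key n
    have han : a n = c ^ 2 * ((1/8) * 6 ^ n + (27/40) * (-2 : ℝ) ^ n + (1/5) * 3 ^ n)
        + (9 * c / 5) * ((3:ℝ) ^ n - (-2 : ℝ) ^ n) - (if n = 0 then c ^ 2 else 0) := by
      linarith [hk]
    rw [han]
    rcases n with _ | m
    · simp; ring
    · rw [if_neg (by omega : ¬ m + 1 = 0), sub_zero]
      have hf : ((m+1).factorial : ℝ) ≠ 0 := by positivity
      field_simp [mul_pow]
      ring
  rw [hfun]
  convert htot using 1
  · rfl
  have := Real.exp_pos (6 * x)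
  ring
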